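/- Fix n ≥ 2. Let 𝒫_n(R) denote the set of Perron numbers λ ≤ R whose minimal polynomial over ℚ has degree n. Then there exists a constant C > 0 such that for all sufficiently large R, (1/C) · R^{n(n+1)/2} ≤ |𝒫_n(R)| ≤ C · R^{n(n+1)/2}. -/

import Mathlib

open Polynomial Finset

section PerronAux

/-! ### Auxiliary: the family of polynomials `X^n - ∑ a_k X^k` -/

noncomputable def perronPoly (n : ℕ) (a : ℕ → ℤ) : ℤ[X] :=
  X ^ n - ∑ k ∈ Finset.range n, monomial k (a k)

variable {n : ℕ} {a : ℕ → ℤ} {l : ℝ}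

lemma perronPoly_degree_sum_lt (hn : 1 ≤ n) :
    (∑ k ∈ Finset.range n, monomial k (a k)).degree < (X ^ n : ℤ[X]).degree := by
  rw [degree_X_pow]
  refine lt_of_le_of_lt (degree_sum_le _ _) ?_
  refine (Finset.sup_lt_iff (WithBot.bot_lt_coe n)).mpr ?_
  intro k hk
  exact lt_of_le_of_lt (degree_monomial_le _ _) (by
    have := Finset.mem_range.mp hk
    exact_mod_cast Nat.cast_lt.mpr this)

lemma perronPoly_monic (hn : 1 ≤ n) : (perronPoly n a).Monic := by
  have := perronPoly_degree_sum_lt (a := a) hn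
  unfold perronPoly
  exact (monic_X_pow n).sub_of_left (by simpa using this)

lemma perronPoly_natDegree (hn : 1 ≤ n) : (perronPoly n a).natDegree = n := by
  have : (perronPoly n a).degree = n := by
    unfold perronPoly
    rw [degree_sub_eq_left_of_degree_lt (perronPoly_degree_sum_lt hn), degree_X_pow]
  exact natDegree_eq_of_degree_eq_some this

lemma perronPoly_coeff_lt (hj : j < n) : (perronPoly n a).coeff j = -(a j) := by
  unfold perronPoly
  rw [coeff_sub, coeff_X_pow, finset_sum_coeff]
  simp only [coeff_monomial]
  rw [Finset.sum_ite_eq' (Finset.range n) j a]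
  simp [Finset.mem_range.mpr hj, Nat.ne_of_lt hj]

lemma perronPoly_aeval {K : Type*} [CommRing K] [Algebra ℤ K] (x : K) :
    aeval x (perronPoly n a) = x ^ n - ∑ k ∈ Finset.range n, (a k : K) * x ^ k := by
  unfold perronPoly
  rw [map_sub, map_pow, aeval_X, map_sum]
  congr 1
  refine Finset.sum_congr rfl fun k _ => ?_
  rw [aeval_monomial]
  simp [algebraMap_int_eq, eq_intCast]

lemma perron_above_root (hn : 1 ≤ n) (hA : ∀ k, k < n → (1:ℤ) ≤ a k) (hl : 1 < l)
    (hroot : l ^ n = ∑ k ∈ Finset.range n, (a k : ℝ) * l ^ k) :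
    ∀ t : ℝ, l < t → ∑ k ∈ Finset.range n, (a k : ℝ) * t ^ k < t ^ n := by
  intro t ht
  have hl0 : (0:ℝ) < l := lt_trans one_pos hl
  have ht0 : (0:ℝ) < t := lt_trans hl0 ht
  have key : (∑ k ∈ Finset.range n, (a k : ℝ) * t ^ k) * l ^ (n-1)
      ≤ (∑ k ∈ Finset.range n, (a k : ℝ) * l ^ k) * t ^ (n-1) := by
    rw [Finset.sum_mul, Finset.sum_mul]
    refine Finset.sum_le_sum fun k hk => ?_
    have hkn : k ≤ n - 1 := by have := Finset.mem_range.mp hk; omega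
    have hak : (0:ℝ) ≤ (a k : ℝ) := by
      have := hA k (Finset.mem_range.mp hk); positivity
    have h1 : t ^ k * l ^ (n-1) ≤ l ^ k * t ^ (n-1) := by
      have hlsplit : l ^ (n-1) = l ^ k * l ^ (n-1-k) := by
        rw [← pow_add]; congr 1; omega
      have htsplit : t ^ (n-1) = t ^ k * t ^ (n-1-k) := by
        rw [← pow_add]; congr 1; omega
      have hmono : l ^ (n-1-k) ≤ t ^ (n-1-k) := pow_le_pow_left₀ hl0.le ht.le _
      rw [hlsplit, htsplit]
      calc t ^ k * (l ^ k * l ^ (n-1-k)) = l ^ k * (t ^ k * l ^ (n-1-k)) := by ring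
        _ ≤ l ^ k * (t ^ k * t ^ (n-1-k)) :=
          mul_le_mul_of_nonneg_left
            (mul_le_mul_of_nonneg_left hmono (pow_nonneg ht0.le k)) (pow_nonneg hl0.le k)
    calc (a k : ℝ) * t ^ k * l ^ (n-1) = (a k : ℝ) * (t ^ k * l ^ (n-1)) := by ring
      _ ≤ (a k : ℝ) * (l ^ k * t ^ (n-1)) := by nlinarith
      _ = (a k : ℝ) * l ^ k * t ^ (n-1) := by ring
  rw [← hroot] at key
  have hln1 : (0:ℝ) < l ^ (n-1) := pow_pos hl0 _
  have h2 : (∑ k ∈ Finset.range n, (a k : ℝ) * t ^ k) ≤ l * t ^ (n-1) := by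
    have hpow : l ^ n = l ^ (n-1) * l := by
      rw [← pow_succ]; congr 1; omega
    refine (mul_le_mul_iff_of_pos_right hln1).mp ?_
    calc (∑ k ∈ Finset.range n, (a k : ℝ) * t ^ k) * l ^ (n-1)
        ≤ l ^ n * t ^ (n-1) := key
      _ = l * t ^ (n-1) * l ^ (n-1) := by rw [hpow]; ring
  calc (∑ k ∈ Finset.range n, (a k : ℝ) * t ^ k) ≤ l * t ^ (n-1) := h2
    _ < t * t ^ (n-1) := by nlinarith [pow_pos ht0 (n-1)]
    _ = t ^ n := by rw [← pow_succ']; congr 1; omega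

lemma perron_dominant (hn : 1 ≤ n) (hA : ∀ k, k < n → (1:ℤ) ≤ a k) (hl : 1 < l)
    (hroot : l ^ n = ∑ k ∈ Finset.range n, (a k : ℝ) * l ^ k)
    (μ : ℂ) (hμ : μ ^ n = ∑ k ∈ Finset.range n, (a k : ℂ) * μ ^ k) (hne : μ ≠ (l : ℂ)) :
    ‖μ‖ < l := by
  have hl0 : (0:ℝ) < l := lt_trans one_pos hl
  -- first: abs μ ≤ l
  have habs : ‖μ‖ ≤ l := by
    by_contra h
    push_neg at h
    have h1 : ‖μ ^ n‖ ≤ ∑ k ∈ Finset.range n, (a k : ℝ) * ‖μ‖ ^ k := by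
      rw [hμ]
      refine le_trans (norm_sum_le _ _) (le_of_eq ?_)
      refine Finset.sum_congr rfl fun k hk => ?_
      have hak : (0:ℤ) ≤ a k := le_trans zero_le_one (hA k (Finset.mem_range.mp hk))
      rw [norm_mul, norm_pow, Complex.norm_intCast]
      rw [abs_of_nonneg (by exact_mod_cast hak)]
    rw [norm_pow] at h1
    exact absurd h1 (not_le.mpr (perron_above_root hn hA hl hroot _ h))
  rcases lt_or_eq_of_le habs with h | h
  · exact h
  -- abs μ = l : derive contradiction
  exfalso
  have hμ0 : μ ≠ 0 := by
    intro h0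
    rw [h0] at h
    simp at h
    linarith
  set m := n - 1 with hm
  have hnm : n = m + 1 := by omega
  -- split the sum
  have hsplit : μ ^ n = (∑ k ∈ Finset.range m, (a k : ℂ) * μ ^ k) + (a m : ℂ) * μ ^ m := by
    rw [hμ, hnm, Finset.sum_range_succ]
  set w := ∑ k ∈ Finset.range m, (a k : ℂ) * μ ^ k with hw
  set z := (a m : ℂ) * μ ^ m with hz
  have ham : (1:ℤ) ≤ a m := hA m (by omega)
  have hz0 : z ≠ 0 := by
    apply mul_ne_zero _ (pow_ne_zero _ hμ0)
    exact_mod_cast (by omega : a m ≠ 0)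
  have hnormz : ‖z‖ = (a m : ℝ) * l ^ m := by
    rw [hz, norm_mul, norm_pow, Complex.norm_intCast, ← h]
    rw [abs_of_nonneg (by exact_mod_cast (by omega : (0:ℤ) ≤ a m))]
  have hnormw : ‖w‖ ≤ ∑ k ∈ Finset.range m, (a k : ℝ) * l ^ k := by
    refine le_trans (norm_sum_le _ _) (le_of_eq ?_)
    refine Finset.sum_congr rfl fun k hk => ?_
    have hak : (0:ℤ) ≤ a k := le_trans zero_le_one (hA k (by have := Finset.mem_range.mp hk; omega))
    rw [norm_mul, norm_pow, Complex.norm_intCast, ← h]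
    rw [abs_of_nonneg (by exact_mod_cast hak)]
  have hsum_eq : l ^ n = (∑ k ∈ Finset.range m, (a k : ℝ) * l ^ k) + (a m : ℝ) * l ^ m := by
    rw [hroot, hnm, Finset.sum_range_succ]
  have hnorm_sum : ‖w + z‖ = l ^ n := by
    rw [← hsplit, norm_pow, h]
  have heq : ‖w + z‖ = ‖w‖ + ‖z‖ := by
    have hle : ‖w + z‖ ≤ ‖w‖ + ‖z‖ := norm_add_le _ _
    have : ‖w‖ + ‖z‖ ≤ l ^ n := by rw [hsum_eq, hnormz]; linarith
    linarith [hnorm_sum ▸ hle, hnorm_sum]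
  have hray : SameRay ℝ w z := sameRay_iff_norm_add.mpr heq
  -- conclude μ is a nonneg real
  have hμreal : ∃ c : ℝ, 0 < c ∧ μ = (c : ℂ) := by
    have key : ∃ c : ℝ, 0 < c ∧ μ ^ n = (c : ℂ) * μ ^ m := by
      by_cases hw0 : w = 0
      · exact ⟨(a m : ℝ), by exact_mod_cast (by omega : (0:ℤ) < a m), by
          rw [hsplit, hw0, zero_add, hz]; push_cast; ring⟩
      · rcases hray.exists_pos_left hw0 hz0 with ⟨r, hr, hrwz⟩
        refine ⟨(r⁻¹ + 1) * (a m : ℝ), by positivity, ?_⟩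
        have hwz : w = (r⁻¹ : ℝ) • z := by
          rw [← hrwz, smul_smul, inv_mul_cancel₀ (ne_of_gt hr), one_smul]
        rw [hsplit, hwz, hz, Complex.real_smul]
        push_cast
        ring
    rcases key with ⟨c, hc, hpow⟩
    refine ⟨c, hc, ?_⟩
    have : μ ^ (m+1) = (c:ℂ) * μ ^ m := by rw [← hnm]; exact hpow
    rw [pow_succ'] at this
    exact mul_right_cancel₀ (pow_ne_zero _ hμ0) this
  rcases hμreal with ⟨c, hc, rfl⟩
  rw [Complex.norm_real, Real.norm_eq_abs, abs_of_pos hc] at h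
  exact hne (by exact_mod_cast h)

lemma perronPoly_irreducible_rat {n : ℕ} {a : ℕ → ℤ} (hn : 1 ≤ n)
    (heven : ∀ k, k < n → 2 ∣ a k) (h4 : ¬ (4 ∣ a 0)) :
    Irreducible ((perronPoly n a).map (Int.castRingHom ℚ)) := by
  have hmonic := perronPoly_monic (a := a) hn
  have hdeg := perronPoly_natDegree (a := a) hn
  have hprim : (perronPoly n a).IsPrimitive := hmonic.isPrimitive
  refine (Polynomial.IsPrimitive.Int.irreducible_iff_irreducible_map_cast hprim).mp ?_
  have hP : (Ideal.span {(2:ℤ)}).IsPrime :=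
    (Ideal.span_singleton_prime (by norm_num)).mpr Int.prime_two
  refine Polynomial.irreducible_of_eisenstein_criterion hP ?_ ?_ ?_ ?_ hprim
  · rw [hmonic.leadingCoeff, Ideal.mem_span_singleton]
    norm_num
  · intro j hj
    have hdegf : (perronPoly n a).degree = (n : WithBot ℕ) := by
      rw [Polynomial.degree_eq_natDegree hmonic.ne_zero, hdeg]
    rw [hdegf] at hj
    have hjn : j < n := by exact_mod_cast hj
    rw [perronPoly_coeff_lt hjn, Ideal.mem_span_singleton]
    exact (heven j hjn).neg_right
  · rw [Polynomial.degree_eq_natDegree hmonic.ne_zero, hdeg]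
    exact_mod_cast Nat.pos_of_ne_zero (by omega)
  · rw [perronPoly_coeff_lt (by omega : 0 < n), Ideal.span_singleton_pow,
      Ideal.mem_span_singleton]
    norm_num
    intro h
    exact h4 (by simpa using h.neg_right)

def abf (n : ℕ) (b : Fin n → ℤ) : ℕ → ℤ := fun k =>
  if h : k < n then 4 * b ⟨k, h⟩ + (if k = 0 then 2 else 0) else 1

lemma sum_range_sub_eq (n : ℕ) : ∑ i ∈ Finset.range n, (n - i) = n * (n + 1) / 2 := by
  induction n with
  | zero => simp
  | succ m ih =>
    rw [Finset.sum_range_succ]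
    have h1 : ∑ i ∈ Finset.range m, (m + 1 - i) = ∑ i ∈ Finset.range m, ((m - i) + 1) :=
      Finset.sum_congr rfl fun i hi => by
        have := Finset.mem_range.mp hi; omega
    rw [h1]
    rw [Finset.sum_add_distrib, ih, Finset.sum_const, Finset.card_range, smul_eq_mul, mul_one]
    have h2 : 2 ∣ m * (m + 1) := Nat.even_mul_succ_self m |>.two_dvd
    have h3 : (m + 1) * (m + 1 + 1) = m * (m + 1) + 2 * (m + 1) := by ring
    omega

end PerronAux

/-- A Perron number: a real algebraic integer `λ > 1` all of whose Galois conjugates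
`μ ≠ λ` satisfy `|μ| < λ`. -/
def IsPerronNumber (l : ℝ) : Prop :=
  1 < l ∧ IsIntegral ℤ l ∧
    ∀ μ ∈ (minpoly ℚ l).aroots ℂ, μ ≠ (l : ℂ) → ‖μ‖ < l

/-- The set of Perron numbers `λ ≤ R` whose minimal polynomial over `ℚ` has degree `n`. -/
noncomputable def perronNumbers (n : ℕ) (R : ℝ) : Set ℝ :=
  {l | IsPerronNumber l ∧ l ≤ R ∧ (minpoly ℚ l).natDegree = n}

section PerronAux2

lemma perron_construct {n : ℕ} (hn : 2 ≤ n) {a : ℕ → ℤ} {R : ℝ}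
    (hpos : ∀ k, k < n → (1:ℤ) ≤ a k) (heven : ∀ k, k < n → 2 ∣ a k) (h4 : ¬ (4 ∣ a 0))
    (hR1 : 1 < R) (hRbig : ∑ k ∈ Finset.range n, (a k : ℝ) * R ^ k < R ^ n) :
    ∃ l ∈ perronNumbers n R, minpoly ℚ l = (perronPoly n a).map (Int.castRingHom ℚ) := by
  have hn1 : 1 ≤ n := by omega
  set f := perronPoly n a with hf
  have hmonic := perronPoly_monic (a := a) hn1
  have hdeg := perronPoly_natDegree (a := a) hn1
  -- continuity
  have hcont : Continuous (fun x : ℝ => aeval x f) := by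
    have : (fun x : ℝ => aeval x f) = fun x : ℝ => eval x (f.map (Int.castRingHom ℝ)) := by
      funext x
      rw [eval_map, aeval_def]
      rfl
    rw [this]
    exact (f.map (Int.castRingHom ℝ)).continuous
  -- endpoint values
  have hval : ∀ x : ℝ, aeval x f = x ^ n - ∑ k ∈ Finset.range n, (a k : ℝ) * x ^ k :=
    fun x => perronPoly_aeval x
  have h1 : aeval (1:ℝ) f < 0 := by
    rw [hval]
    have : (n : ℝ) ≤ ∑ k ∈ Finset.range n, (a k : ℝ) * (1:ℝ) ^ k := by
      calc (n:ℝ) = ∑ _k ∈ Finset.range n, (1:ℝ) := by simp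
        _ ≤ _ := by
            refine Finset.sum_le_sum fun k hk => ?_
            have := hpos k (Finset.mem_range.mp hk)
            simp only [one_pow, mul_one]
            exact_mod_cast this
    have hn2 : (2:ℝ) ≤ (n:ℝ) := by exact_mod_cast hn
    simp only [one_pow, mul_one] at this ⊢
    linarith
  have hR : 0 < aeval (R:ℝ) f := by rw [hval]; linarith
  -- IVT
  obtain ⟨l, hlmem, hleval⟩ : ∃ l ∈ Set.Ioo (1:ℝ) R, aeval l f = 0 := by
    have := intermediate_value_Ioo (le_of_lt hR1) hcont.continuousOn
    have h0 : (0:ℝ) ∈ Set.Ioo (aeval (1:ℝ) f) (aeval R f) := ⟨h1, hR⟩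
    obtain ⟨l, hl, hl2⟩ := this h0
    exact ⟨l, hl, hl2⟩
  obtain ⟨hl1, hlR⟩ := hlmem
  have hroot : l ^ n = ∑ k ∈ Finset.range n, (a k : ℝ) * l ^ k := by
    have := hval l
    rw [hleval] at this
    linarith [this]
  -- minpoly
  have hQmonic : (f.map (Int.castRingHom ℚ)).Monic := hmonic.map _
  have haev : aeval l (f.map (Int.castRingHom ℚ)) = 0 := by
    have : (Int.castRingHom ℚ) = algebraMap ℤ ℚ := by rfl
    rw [this, aeval_map_algebraMap]
    exact hleval
  have hminpoly : minpoly ℚ l = f.map (Int.castRingHom ℚ) :=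
    (minpoly.eq_of_irreducible_of_monic (perronPoly_irreducible_rat hn1 heven h4)
      haev hQmonic).symm
  have hint : IsIntegral ℤ l := ⟨f, hmonic, by rwa [← aeval_def]⟩
  refine ⟨l, ⟨⟨hl1, hint, ?_⟩, le_of_lt hlR, ?_⟩, hminpoly⟩
  · intro μ hμ hne
    rw [hminpoly] at hμ
    have hμroot : aeval μ f = 0 := by
      rw [aroots_def, Polynomial.map_map] at hμ
      have hcomp : (algebraMap ℚ ℂ).comp (Int.castRingHom ℚ) = Int.castRingHom ℂ :=
        RingHom.ext_int _ _
      rw [hcomp] at hμ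
      have := isRoot_of_mem_roots hμ
      rw [IsRoot, eval_map] at this
      rw [aeval_def]
      exact this
    rw [perronPoly_aeval] at hμroot
    refine perron_dominant hn1 hpos hl1 hroot μ ?_ hne
    exact sub_eq_zero.mp hμroot
  · rw [hminpoly]
    rw [hmonic.natDegree_map]
    exact hdeg

lemma isPerron_mem_aroots {l l' : ℝ} (hl : IsPerronNumber l) (hl' : IsPerronNumber l')
    (h : minpoly ℚ l = minpoly ℚ l') : (l' : ℂ) ∈ (minpoly ℚ l).aroots ℂ := by
  rw [h]
  have hint : IsIntegral ℚ l' := hl'.2.1.tower_top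
  rw [Polynomial.mem_aroots]
  refine ⟨minpoly.ne_zero hint, ?_⟩
  have : aeval ((algebraMap ℝ ℂ) l') (minpoly ℚ l') = algebraMap ℝ ℂ (aeval l' (minpoly ℚ l')) :=
    (aeval_algebraMap_apply ℂ l' _)
  rw [minpoly.aeval] at this
  simpa using this

lemma perron_unique_root {l l' : ℝ} (hl : IsPerronNumber l) (hl' : IsPerronNumber l')
    (h : minpoly ℚ l = minpoly ℚ l') : l = l' := by
  by_contra hne
  have h1 : ‖(l' : ℂ)‖ < l := by
    refine hl.2.2 _ (isPerron_mem_aroots hl hl' h) ?_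
    intro hc
    exact hne (by exact_mod_cast hc.symm)
  have h2 : ‖(l : ℂ)‖ < l' := by
    refine hl'.2.2 _ (isPerron_mem_aroots hl' hl h.symm) ?_
    intro hc
    exact hne (by exact_mod_cast hc)
  rw [Complex.norm_real, Real.norm_eq_abs, abs_of_pos (lt_trans one_pos hl'.1)] at h1
  rw [Complex.norm_real, Real.norm_eq_abs, abs_of_pos (lt_trans one_pos hl.1)] at h2
  linarith

lemma perron_coeff_bound {n : ℕ} {R : ℝ} (hR : 1 ≤ R) {l : ℝ} (hmem : l ∈ perronNumbers n R)
    (i : ℕ) : |((minpoly ℤ l).coeff i : ℝ)| ≤ 2 ^ n * R ^ (n - i) := by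
  obtain ⟨hP, hlR, hdeg⟩ := hmem
  have hint : IsIntegral ℤ l := hP.2.1
  have hQint : IsIntegral ℚ l := hint.tower_top
  have hq : minpoly ℚ l = (minpoly ℤ l).map (algebraMap ℤ ℚ) :=
    minpoly.isIntegrallyClosed_eq_field_fractions' ℚ hint
  have hl0 : (0:ℝ) < l := lt_trans one_pos hP.1
  have hbound := Polynomial.coeff_le_of_roots_le (p := minpoly ℚ l) (f := algebraMap ℚ ℂ)
    (B := R) i (minpoly.monic hQint) (IsAlgClosed.splits _) ?_
  · have hcoeff : ((minpoly ℚ l).map (algebraMap ℚ ℂ)).coeff i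
        = algebraMap ℚ ℂ ((minpoly ℚ l).coeff i) := Polynomial.coeff_map _ _
    rw [hcoeff] at hbound
    have hnorm : ‖algebraMap ℚ ℂ ((minpoly ℚ l).coeff i)‖ = |(((minpoly ℚ l).coeff i : ℚ) : ℝ)| := by
      rw [show (algebraMap ℚ ℂ) ((minpoly ℚ l).coeff i) = (((minpoly ℚ l).coeff i : ℚ) : ℂ) from rfl]
      rw [Complex.norm_ratCast]
    rw [hnorm, hdeg] at hbound
    have hc : ((minpoly ℚ l).coeff i : ℝ) = ((minpoly ℤ l).coeff i : ℝ) := by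
      rw [hq, Polynomial.coeff_map]
      push_cast
      rfl
    rw [hc] at hbound
    refine le_trans hbound ?_
    have hch : (n.choose i : ℝ) ≤ 2 ^ n := by
      have : n.choose i ≤ 2 ^ n := by
        rcases le_or_gt i n with hin | hin
        · calc n.choose i ≤ ∑ j ∈ Finset.range (n+1), n.choose j :=
              Finset.single_le_sum (fun j _ => Nat.zero_le _) (Finset.mem_range.mpr (by omega))
            _ = 2 ^ n := Nat.sum_range_choose n
        · simp [Nat.choose_eq_zero_of_lt hin]
      exact_mod_cast this
    have hpow : (0:ℝ) ≤ R ^ (n - i) := pow_nonneg (by linarith) _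
    nlinarith [hpow]
  · intro z hz
    have hz' : z ∈ (minpoly ℚ l).aroots ℂ := hz
    by_cases hzl : z = (l : ℂ)
    · rw [hzl, Complex.norm_real, Real.norm_eq_abs, abs_of_pos hl0]; linarith
    · have := hP.2.2 z hz' hzl
      linarith

lemma minpolyZ_deg {n : ℕ} {R : ℝ} {l : ℝ} (hmem : l ∈ perronNumbers n R) :
    (minpoly ℤ l).natDegree = n := by
  obtain ⟨hP, _, hdeg⟩ := hmem
  have hq : minpoly ℚ l = (minpoly ℤ l).map (algebraMap ℤ ℚ) :=
    minpoly.isIntegrallyClosed_eq_field_fractions' ℚ hP.2.1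
  rw [hq, Polynomial.natDegree_map_eq_of_injective
    (algebraMap ℤ ℚ).injective_int] at hdeg
  exact hdeg

lemma perron_injOn {n : ℕ} {R : ℝ} :
    Set.InjOn (fun l => fun i : Fin n => (minpoly ℤ l).coeff i) (perronNumbers n R) := by
  intro l hl l' hl' heq
  have hdl := minpolyZ_deg hl
  have hdl' := minpolyZ_deg hl'
  have hml : (minpoly ℤ l).Monic := minpoly.monic hl.1.2.1
  have hml' : (minpoly ℤ l').Monic := minpoly.monic hl'.1.2.1
  have hpq : minpoly ℤ l = minpoly ℤ l' := by
    ext j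
    rcases lt_trichotomy j n with hj | hj | hj
    · exact congrFun heq ⟨j, hj⟩
    · subst hj
      rw [← hdl, hml.coeff_natDegree]
      rw [hdl, ← hdl', hml'.coeff_natDegree]
    · rw [Polynomial.coeff_eq_zero_of_natDegree_lt (by omega : (minpoly ℤ l).natDegree < j),
        Polynomial.coeff_eq_zero_of_natDegree_lt (by omega : (minpoly ℤ l').natDegree < j)]
  refine perron_unique_root hl.1 hl'.1 ?_
  rw [minpoly.isIntegrallyClosed_eq_field_fractions' ℚ hl.1.2.1,
    minpoly.isIntegrallyClosed_eq_field_fractions' ℚ hl'.1.2.1, hpq]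

lemma perron_upper {n : ℕ} (hn : 2 ≤ n) {R : ℝ} (hR : 1 ≤ R) :
    (perronNumbers n R).Finite ∧
    ((perronNumbers n R).ncard : ℝ) ≤ (3 * 2 ^ n) ^ n * R ^ (n * (n + 1) / 2) := by
  classical
  set M : Fin n → ℤ := fun i => ⌊(2:ℝ) ^ n * R ^ (n - (i:ℕ))⌋ with hM
  set box : Finset (Fin n → ℤ) := Fintype.piFinset fun i => Finset.Icc (-(M i)) (M i) with hbox
  set Φ : ℝ → (Fin n → ℤ) := fun l => fun i : Fin n => (minpoly ℤ l).coeff i with hΦ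
  have himg : Φ '' (perronNumbers n R) ⊆ ↑box := by
    rintro _ ⟨l, hl, rfl⟩
    rw [Finset.mem_coe, Fintype.mem_piFinset]
    intro i
    have hb := perron_coeff_bound hR hl (i : ℕ)
    rw [Finset.mem_Icc]
    constructor
    · rw [neg_le]
      refine Int.le_floor.mpr ?_
      push_cast
      rw [abs_le] at hb
      linarith [hb.1]
    · refine Int.le_floor.mpr ?_
      rw [abs_le] at hb
      exact hb.2
  have hfin : (perronNumbers n R).Finite := by
    refine Set.Finite.of_finite_image (Set.Finite.subset box.finite_toSet himg) perron_injOn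
  refine ⟨hfin, ?_⟩
  have hcard : (perronNumbers n R).ncard = (Φ '' (perronNumbers n R)).ncard :=
    (Set.ncard_image_of_injOn perron_injOn).symm
  have hcard2 : (Φ '' (perronNumbers n R)).ncard ≤ box.card := by
    rw [← Set.ncard_coe_finset]
    exact Set.ncard_le_ncard himg box.finite_toSet
  have hbox_card : (box.card : ℝ) ≤ ∏ i : Fin n, (3 * 2 ^ n * R ^ (n - (i:ℕ))) := by
    rw [hbox, Fintype.card_piFinset]
    push_cast
    refine Finset.prod_le_prod (fun i _ => by positivity) fun i _ => ?_
    have h1 : (1:ℝ) ≤ 2 ^ n * R ^ (n - (i:ℕ)) := by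
      have hRp : (1:ℝ) ≤ R ^ (n - (i:ℕ)) := one_le_pow₀ hR
      have h2n : (1:ℝ) ≤ 2 ^ n := one_le_pow₀ (by norm_num)
      nlinarith [hRp, h2n]
    have hfloor : ((M i : ℝ)) ≤ 2 ^ n * R ^ (n - (i:ℕ)) := Int.floor_le _
    have hM0 : (0:ℤ) ≤ M i := by
      rw [hM]
      exact Int.le_floor.mpr (by push_cast; linarith)
    rw [Int.card_Icc]
    have : (M i + 1 - -(M i)).toNat = 2 * (M i).toNat + 1 := by omega
    rw [this]
    have hcast : (((M i).toNat : ℤ) : ℝ) = ((M i : ℤ) : ℝ) := by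
      exact_mod_cast congrArg (fun z : ℤ => (z : ℝ)) (Int.toNat_of_nonneg hM0)
    push_cast
    push_cast at hcast
    rw [hcast]
    linarith [hfloor, h1]
  have hprod : ∏ i : Fin n, (3 * (2:ℝ) ^ n * R ^ (n - (i:ℕ)))
      = (3 * 2 ^ n) ^ n * R ^ (n * (n + 1) / 2) := by
    rw [Finset.prod_mul_distrib, Finset.prod_const, Finset.card_univ, Fintype.card_fin]
    congr 1
    rw [Finset.prod_pow_eq_pow_sum]
    congr 1
    rw [Fin.sum_univ_eq_sum_range]
    exact sum_range_sub_eq n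
  calc ((perronNumbers n R).ncard : ℝ) ≤ (box.card : ℝ) := by
        exact_mod_cast hcard ▸ hcard2
    _ ≤ _ := hbox_card
    _ = _ := hprod

lemma perron_lower {n : ℕ} (hn : 2 ≤ n) {R : ℝ} (hR : 32 * n ≤ R)
    (hfin : (perronNumbers n R).Finite) :
    R ^ (n * (n + 1) / 2) / (16 * n) ^ n ≤ ((perronNumbers n R).ncard : ℝ) := by
  classical
  have hn0 : (0:ℝ) < n := by positivity
  have hn2 : (2:ℝ) ≤ (n:ℝ) := by exact_mod_cast hn
  have hR1 : (1:ℝ) < R := by linarith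
  have hR0 : (0:ℝ) < R := by linarith
  set N : Fin n → ℤ := fun i => ⌊R ^ (n - (i:ℕ)) / (8 * n)⌋ with hN
  have hNbig : ∀ i : Fin n, (4:ℝ) ≤ R ^ (n - (i:ℕ)) / (8 * n) ∧ (16 * n : ℝ) ≤ R ^ (n - (i:ℕ)) := by
    intro i
    have h1 : 1 ≤ n - (i:ℕ) := by have := i.2; omega
    have h2 : R ≤ R ^ (n - (i:ℕ)) := by
      calc R = R ^ 1 := (pow_one R).symm
        _ ≤ R ^ (n - (i:ℕ)) := pow_le_pow_right₀ (le_of_lt hR1) h1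
    constructor
    · rw [le_div_iff₀ (by positivity)]
      nlinarith
    · nlinarith
  have hN4 : ∀ i : Fin n, (4:ℤ) ≤ N i := by
    intro i
    exact Int.le_floor.mpr (by exact_mod_cast (hNbig i).1)
  set box : Finset (Fin n → ℤ) := Fintype.piFinset fun i => Finset.Icc 1 (N i) with hbox
  -- each parameter gives a Perron number
  have key : ∀ b ∈ box, ∃ l, l ∈ perronNumbers n R ∧
      minpoly ℚ l = (perronPoly n (abf n b)).map (Int.castRingHom ℚ) := by
    intro b hb
    rw [hbox, Fintype.mem_piFinset] at hb
    have hble : ∀ i : Fin n, 1 ≤ b i ∧ b i ≤ N i := by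
      intro i
      have := hb i
      rwa [Finset.mem_Icc] at this
    have hpos : ∀ k, k < n → (1:ℤ) ≤ abf n b k := by
      intro k hk
      rw [abf, dif_pos hk]
      have := (hble ⟨k, hk⟩).1
      split <;> omega
    have heven : ∀ k, k < n → 2 ∣ abf n b k := by
      intro k hk
      rw [abf, dif_pos hk]
      split <;> omega
    have h4 : ¬ (4 ∣ abf n b 0) := by
      rw [abf, dif_pos (by omega : 0 < n), if_pos rfl]
      omega
    refine perron_construct hn hpos heven h4 hR1 ?_
    have hterm : ∀ k ∈ Finset.range n, (abf n b k : ℝ) * R ^ k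
        ≤ R ^ n / (2 * n) + 2 * R ^ (n - 1) := by
      intro k hk
      have hkn := Finset.mem_range.mp hk
      have hub : (abf n b k : ℝ) ≤ R ^ (n - k) / (2 * n) + 2 := by
        rw [abf, dif_pos hkn]
        have h1 := (hble ⟨k, hkn⟩).2
        have h2 : ((N ⟨k, hkn⟩ : ℤ) : ℝ) ≤ R ^ (n - k) / (8 * n) := Int.floor_le _
        have h3 : ((b ⟨k, hkn⟩ : ℤ) : ℝ) ≤ R ^ (n - k) / (8 * n) := le_trans (by exact_mod_cast h1) h2
        have : ((4 * b ⟨k, hkn⟩ + (if k = 0 then 2 else 0) : ℤ) : ℝ)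
            ≤ 4 * (R ^ (n - k) / (8 * n)) + 2 := by
          push_cast
          split <;> [skip; skip] <;> nlinarith
        refine le_trans this (le_of_eq ?_)
        have h5 : 4 * (R ^ (n - k) / (8 * (n:ℝ))) = R ^ (n - k) / (2 * n) := by
          field_simp
          ring
        rw [h5]
      have hRk : (0:ℝ) < R ^ k := pow_pos hR0 k
      have hsplit : R ^ (n - k) * R ^ k = R ^ n := by
        rw [← pow_add]
        congr 1
        omega
      have hRlt : R ^ k ≤ R ^ (n - 1) := pow_le_pow_right₀ (le_of_lt hR1) (by omega)
      calc (abf n b k : ℝ) * R ^ k ≤ (R ^ (n - k) / (2 * n) + 2) * R ^ k := by nlinarith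
        _ = R ^ (n - k) * R ^ k / (2 * n) + 2 * R ^ k := by ring
        _ ≤ R ^ n / (2 * n) + 2 * R ^ (n - 1) := by
            rw [hsplit]
            linarith
    calc ∑ k ∈ Finset.range n, (abf n b k : ℝ) * R ^ k
        ≤ ∑ _k ∈ Finset.range n, (R ^ n / (2 * n) + 2 * R ^ (n - 1)) :=
          Finset.sum_le_sum hterm
      _ = n * (R ^ n / (2 * n) + 2 * R ^ (n - 1)) := by
          rw [Finset.sum_const, Finset.card_range, nsmul_eq_mul]
      _ = R ^ n / 2 + 2 * n * R ^ (n - 1) := by field_simp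
      _ < R ^ n := by
          have hsplit : R * R ^ (n - 1) = R ^ n := by
            rw [← pow_succ']
            congr 1
            omega
          have hp : (0:ℝ) < R ^ (n - 1) := pow_pos hR0 _
          nlinarith [hsplit, hp]
  choose! g hg1 hg2 using key
  have hinj : Set.InjOn g ↑box := by
    intro b hb b' hb' heq
    have h1 := hg2 b (by exact_mod_cast hb)
    have h2 := hg2 b' (by exact_mod_cast hb')
    rw [heq] at h1
    have hpoly : perronPoly n (abf n b) = perronPoly n (abf n b') := by
      have := h1.symm.trans h2
      exact Polynomial.map_injective _ (algebraMap ℤ ℚ).injective_int (by exact_mod_cast this)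
    funext i
    have hc := congrArg (fun p : Polynomial ℤ => p.coeff (i : ℕ)) hpoly
    simp only [perronPoly_coeff_lt i.2] at hc
    have : abf n b (i : ℕ) = abf n b' (i : ℕ) := by omega
    rw [abf, abf, dif_pos i.2, dif_pos i.2] at this
    simp only [Fin.eta] at this
    split at this <;> omega
  have himg : g '' ↑box ⊆ perronNumbers n R := by
    rintro _ ⟨b, hb, rfl⟩
    exact hg1 b (by exact_mod_cast hb)
  have h1 : (box.card : ℝ) ≤ ((perronNumbers n R).ncard : ℝ) := by
    have h2 := Set.ncard_le_ncard himg hfin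
    rw [Set.ncard_image_of_injOn hinj, Set.ncard_coe_finset] at h2
    exact_mod_cast h2
  refine le_trans ?_ h1
  rw [hbox, Fintype.card_piFinset]
  have hcardIcc : ∀ i : Fin n, ((Finset.Icc (1:ℤ) (N i)).card : ℝ) = ((N i).toNat : ℝ) := by
    intro i
    rw [Int.card_Icc]
    congr 1
    omega
  push_cast
  rw [show (∏ i : Fin n, ((Finset.Icc (1:ℤ) (N i)).card : ℝ)) = ∏ i : Fin n, ((N i).toNat : ℝ) from
    Finset.prod_congr rfl fun i _ => hcardIcc i]
  have hterm : ∀ i : Fin n, R ^ (n - (i:ℕ)) / (16 * n) ≤ ((N i).toNat : ℝ) := by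
    intro i
    have hNi : ((N i).toNat : ℝ) = ((N i : ℤ) : ℝ) := by
      exact_mod_cast congrArg (fun z : ℤ => (z : ℝ)) (Int.toNat_of_nonneg (by linarith [hN4 i]))
    rw [hNi]
    have hfl : R ^ (n - (i:ℕ)) / (8 * n) - 1 < ((N i : ℤ) : ℝ) := Int.sub_one_lt_floor _
    have h16 := (hNbig i).2
    have : R ^ (n - (i:ℕ)) / (16 * n) ≤ R ^ (n - (i:ℕ)) / (8 * n) - 1 := by
      rw [div_sub' (by positivity : (8:ℝ) * n ≠ 0), div_le_div_iff₀ (by positivity) (by positivity)]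
      ring_nf
      nlinarith [h16]
    linarith
  calc R ^ (n * (n + 1) / 2) / (16 * (n:ℝ)) ^ n
      = ∏ i : Fin n, (R ^ (n - (i:ℕ)) / (16 * n)) := by
        rw [Finset.prod_div_distrib, Finset.prod_const, Finset.card_univ, Fintype.card_fin]
        congr 1
        rw [Finset.prod_pow_eq_pow_sum]
        congr 1
        rw [Fin.sum_univ_eq_sum_range]
        exact (sum_range_sub_eq n).symm
    _ ≤ ∏ i : Fin n, ((N i).toNat : ℝ) :=
        Finset.prod_le_prod (fun i _ => by positivity) fun i _ => hterm i

end PerronAux2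

/-- `|𝒫_n(R)| ∼ R^(n(n+1)/2)`: there is `C > 0` with
`(1/C) · R^(n(n+1)/2) ≤ |𝒫_n(R)| ≤ C · R^(n(n+1)/2)` for all sufficiently large `R`. -/
theorem perronNumbers_card_asymp (n : ℕ) (hn : 2 ≤ n) :
    ∃ C : ℝ, 0 < C ∧ ∀ᶠ R : ℝ in Filter.atTop,
      (1 / C) * R ^ (n * (n + 1) / 2) ≤ ((perronNumbers n R).ncard : ℝ) ∧
      ((perronNumbers n R).ncard : ℝ) ≤ C * R ^ (n * (n + 1) / 2) := by
  refine ⟨(3 * 2 ^ n) ^ n + (16 * (n:ℝ)) ^ n, by positivity, ?_⟩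
  filter_upwards [Filter.eventually_ge_atTop (max 1 (32 * (n:ℝ)))] with R hRge
  have hR1 : (1:ℝ) ≤ R := le_trans (le_max_left _ _) hRge
  have hR32 : 32 * (n:ℝ) ≤ R := le_trans (le_max_right _ _) hRge
  obtain ⟨hfin, hup⟩ := perron_upper hn hR1
  have hlow := perron_lower hn hR32 hfin
  have hRpow : (0:ℝ) ≤ R ^ (n * (n + 1) / 2) := by positivity
  have hC16 : (0:ℝ) < (16 * (n:ℝ)) ^ n := by positivity
  have hC3 : (0:ℝ) < (3 * (2:ℝ) ^ n) ^ n := by positivity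
  constructor
  · have h1 : (1 / ((3 * 2 ^ n) ^ n + (16 * (n:ℝ)) ^ n)) * R ^ (n * (n + 1) / 2)
        ≤ R ^ (n * (n + 1) / 2) / (16 * (n:ℝ)) ^ n := by
      rw [one_div_mul_eq_div]
      exact div_le_div_of_nonneg_left hRpow hC16 (by linarith)
    exact le_trans h1 hlow
  · have h2 : (3 * (2:ℝ) ^ n) ^ n * R ^ (n * (n + 1) / 2)
        ≤ ((3 * 2 ^ n) ^ n + (16 * (n:ℝ)) ^ n) * R ^ (n * (n + 1) / 2) := by
      nlinarith [hC16, hRpow]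
    push_cast at hup ⊢
    linarith
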